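/- For a doubly infinite sequence a = (a_i)_{i∈ℤ} and variables x_1,...,x_p, the factorial elementary functions satisfy e_{j+1}(x | τa) = e_{j+1}(x | a) + (a_1 − a_{p−j+1}) · e_j(x | a), where (τa)_n = a_{n+1}. -/

import Mathlib

open Finset
open scoped Classical

noncomputable section

variable {R : Type*} [CommRing R]

/-- shifted sequence: `(τ^s a)_n = a_{n+s}` -/
def shiftSeq (a : ℤ → R) (s : ℤ) : ℤ → R := fun n => a (n + s)

/-- factorial complete homogeneous function `h_k(x|a)`
    (`= Σ_{1≤i_1≤...≤i_k≤p} ∏_r (x_{i_r} - a_{i_r + r - 1})`, `0` for `k < 0`) -/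
def fh (p : ℕ) (x : Fin p → R) (a : ℤ → R) (k : ℤ) : R :=
  if 0 ≤ k then
    ∑ f ∈ Finset.univ.filter (fun f : Fin k.toNat → Fin p => Monotone f),
      ∏ r : Fin k.toNat, (x (f r) - a (((f r : ℕ) : ℤ) + ((r : ℕ) : ℤ) + 1))
  else 0

/-- factorial elementary function `e_k(x|a)`
    (`= Σ_{1≤i_1<...<i_k≤p} ∏_r (x_{i_r} - a_{i_r - r + 1})`, `0` for `k < 0`;
    it vanishes automatically for `k > p`) -/
def fe (p : ℕ) (x : Fin p → R) (a : ℤ → R) (k : ℤ) : R :=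
  if 0 ≤ k then
    ∑ f ∈ Finset.univ.filter (fun f : Fin k.toNat → Fin p => StrictMono f),
      ∏ r : Fin k.toNat, (x (f r) - a (((f r : ℕ) : ℤ) - ((r : ℕ) : ℤ) + 1))
  else 0

/-- nat-index version -/
def feN (p : ℕ) (x : Fin p → R) (a : ℤ → R) (m : ℕ) : R :=
  ∑ f ∈ Finset.univ.filter (fun f : Fin m → Fin p => StrictMono f),
    ∏ r : Fin m, (x (f r) - a (((f r : ℕ) : ℤ) - ((r : ℕ) : ℤ) + 1))

lemma fe_natCast (p : ℕ) (x : Fin p → R) (a : ℤ → R) (m : ℕ) :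
    fe p x a (m : ℤ) = feN p x a m := by
  rw [fe, if_pos (Int.natCast_nonneg m)]
  rfl

lemma fe_neg (p : ℕ) (x : Fin p → R) (a : ℤ → R) {k : ℤ} (h : k < 0) :
    fe p x a k = 0 := if_neg (not_le.2 h)

lemma feN_zero (p : ℕ) (x : Fin p → R) (a : ℤ → R) : feN p x a 0 = 1 := by
  letI : Unique (Fin 0 → Fin p) := ⟨⟨fun i => i.elim0⟩, fun f => funext fun i => i.elim0⟩
  have h : (Finset.univ.filter (fun f : Fin 0 → Fin p => StrictMono f)) = Finset.univ := by
    apply Finset.filter_true_of_mem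
    intro f _ i j hij
    exact absurd hij i.elim0
  rw [feN, h, Finset.univ_unique, Finset.sum_singleton, Fin.prod_univ_zero]

lemma feN_zero_fun (x : Fin 0 → R) (a : ℤ → R) (m : ℕ) : feN 0 x a (m+1) = 0 := by
  letI : IsEmpty (Fin (m+1) → Fin 0) := ⟨fun f => (f 0).elim0⟩
  rw [feN, Finset.univ_eq_empty, Finset.filter_empty, Finset.sum_empty]

lemma snoc_strictMono {m p : ℕ} {g : Fin m → Fin p} (hg : StrictMono g) :
    StrictMono (Fin.snoc (fun r => (g r).castSucc) (Fin.last p) : Fin (m+1) → Fin (p+1)) := by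
  intro i j hij
  rcases Fin.eq_castSucc_or_eq_last j with ⟨j', rfl⟩ | rfl
  · rcases Fin.eq_castSucc_or_eq_last i with ⟨i', rfl⟩ | rfl
    · simp only [Fin.snoc_castSucc]
      exact Fin.castSucc_lt_castSucc_iff.2 (hg (Fin.castSucc_lt_castSucc_iff.1 hij))
    · exact absurd hij (not_lt.2 (Fin.le_last _))
  · rcases Fin.eq_castSucc_or_eq_last i with ⟨i', rfl⟩ | rfl
    · simp only [Fin.snoc_castSucc, Fin.snoc_last]
      exact Fin.castSucc_lt_last _
    · exact absurd hij (lt_irrefl _)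

lemma feN_succ (p m : ℕ) (x : Fin (p+1) → R) (a : ℤ → R) :
    feN (p+1) x a (m+1) =
      feN p (x ∘ Fin.castSucc) a (m+1)
      + (x (Fin.last p) - a ((p:ℤ) - (m:ℤ) + 1)) * feN p (x ∘ Fin.castSucc) a m := by
  classical
  rw [feN, ← Finset.sum_filter_add_sum_filter_not
      (Finset.univ.filter (fun f : Fin (m+1) → Fin (p+1) => StrictMono f))
      (fun f => f (Fin.last m) = Fin.last p)]
  have hne : ∑ f ∈ (Finset.univ.filter (fun f : Fin (m+1) → Fin (p+1) => StrictMono f)).filter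
        (fun f => ¬ f (Fin.last m) = Fin.last p),
        ∏ r : Fin (m+1), (x (f r) - a (((f r : ℕ) : ℤ) - ((r : ℕ) : ℤ) + 1))
      = feN p (x ∘ Fin.castSucc) a (m+1) := by
    rw [feN]
    -- key fact: all values avoid the top
    have key : ∀ f : Fin (m+1) → Fin (p+1), StrictMono f → f (Fin.last m) ≠ Fin.last p →
        ∀ r : Fin (m+1), f r ≠ Fin.last p := by
      intro f hf hlast r
      exact fun h => hlast (le_antisymm (Fin.le_last _)
        (h ▸ hf.monotone (Fin.le_last r)))
    refine Finset.sum_bij'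
      (i := fun f hf => fun r => (f r).castPred
        (key f (by simp_all [Finset.mem_filter]) (by simp_all [Finset.mem_filter]) r))
      (j := fun g hg => fun r => (g r).castSucc) ?_ ?_ ?_ ?_ ?_
    · intro f hf
      simp only [Finset.mem_filter, Finset.mem_univ, true_and] at hf ⊢
      intro i j hij
      have h2 := hf.1 hij
      simp only [Fin.lt_def, Fin.coe_castPred]
      exact h2
    · intro g hg
      simp only [Finset.mem_filter, Finset.mem_univ, true_and] at hg ⊢
      constructor
      · exact fun i j hij => Fin.castSucc_lt_castSucc_iff.2 (hg hij)
      · exact Fin.ne_last_of_lt (Fin.castSucc_lt_last _)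
    · intro f hf
      funext r
      exact Fin.castSucc_castPred _ _
    · intro g hg
      funext r
      simp [Fin.castPred_castSucc]
    · intro f hf
      apply Finset.prod_congr rfl
      intro r _
      simp [Function.comp, Fin.castSucc_castPred]
  have heq : ∑ f ∈ (Finset.univ.filter (fun f : Fin (m+1) → Fin (p+1) => StrictMono f)).filter
        (fun f => f (Fin.last m) = Fin.last p),
        ∏ r : Fin (m+1), (x (f r) - a (((f r : ℕ) : ℤ) - ((r : ℕ) : ℤ) + 1))
      = (x (Fin.last p) - a ((p:ℤ) - (m:ℤ) + 1)) * feN p (x ∘ Fin.castSucc) a m := by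
    rw [feN, Finset.mul_sum]
    have key : ∀ f : Fin (m+1) → Fin (p+1), StrictMono f → f (Fin.last m) = Fin.last p →
        ∀ r : Fin m, f r.castSucc ≠ Fin.last p := by
      intro f hf hlast r
      exact Fin.ne_last_of_lt (hlast ▸ hf (Fin.castSucc_lt_last r))
    refine Finset.sum_bij'
      (i := fun f hf => fun r => (f r.castSucc).castPred
        (key f (by simp_all [Finset.mem_filter]) (by simp_all [Finset.mem_filter]) r))
      (j := fun g hg => Fin.snoc (fun r => (g r).castSucc) (Fin.last p)) ?_ ?_ ?_ ?_ ?_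
    · intro f hf
      simp only [Finset.mem_filter, Finset.mem_univ, true_and] at hf ⊢
      intro i j hij
      have h2 := hf.1 (Fin.castSucc_lt_castSucc_iff.2 hij)
      simp only [Fin.lt_def, Fin.coe_castPred]
      exact h2
    · intro g hg
      simp only [Finset.mem_filter, Finset.mem_univ, true_and] at hg ⊢
      exact ⟨snoc_strictMono hg, Fin.snoc_last _ _⟩
    · intro f hf
      simp only [Finset.mem_filter, Finset.mem_univ, true_and] at hf
      funext r
      rcases Fin.eq_castSucc_or_eq_last r with ⟨r', rfl⟩ | rfl
      · beta_reduce
        rw [Fin.snoc_castSucc]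
        exact Fin.castSucc_castPred _ _
      · simp [Fin.snoc_last, hf.2]
    · intro g hg
      funext r
      simp [Fin.snoc_castSucc, Fin.castPred_castSucc]
    · intro f hf
      simp only [Finset.mem_filter, Finset.mem_univ, true_and] at hf
      rw [Fin.prod_univ_castSucc]
      simp only [hf.2]
      have hc : (((Fin.last p : ℕ) : ℤ) - ((Fin.last m : ℕ) : ℤ) + 1) = (p:ℤ) - (m:ℤ) + 1 := by
        simp [Fin.val_last]
      rw [hc, mul_comm]
      congr 1
  rw [hne, heq]
  ring

lemma fe_succ (p : ℕ) (x : Fin (p+1) → R) (a : ℤ → R) (k : ℤ) :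
    fe (p+1) x a k = fe p (x ∘ Fin.castSucc) a k
      + (x (Fin.last p) - a ((p:ℤ) - k + 2)) * fe p (x ∘ Fin.castSucc) a (k-1) := by
  rcases lt_trichotomy k 0 with h | rfl | h
  · rw [fe_neg _ _ _ h, fe_neg _ _ _ h, fe_neg _ _ _ (by omega : k - 1 < 0)]
    ring
  · rw [show (0:ℤ) = ((0:ℕ):ℤ) from rfl, fe_natCast, fe_natCast, feN_zero, feN_zero,
      fe_neg _ _ _ (by norm_num : ((0:ℕ):ℤ) - 1 < 0)]
    ring
  · obtain ⟨m, rfl⟩ : ∃ m : ℕ, k = (m:ℤ) + 1 := ⟨(k-1).toNat, by omega⟩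
    have e1 : (m:ℤ) + 1 = ((m+1:ℕ):ℤ) := by push_cast; ring
    have e2 : ((m+1:ℕ):ℤ) - 1 = ((m:ℕ):ℤ) := by push_cast; ring
    have e3 : (p:ℤ) - ((m:ℤ)+1) + 2 = (p:ℤ) - (m:ℤ) + 1 := by ring
    rw [e3, e1, e2, fe_natCast, fe_natCast, fe_natCast, feN_succ]

lemma fe_shift (p : ℕ) (x : Fin p → R) (a : ℤ → R) (k : ℤ) :
    fe p x (shiftSeq a 1) k = fe p x a k + (a 1 - a ((p:ℤ) - k + 2)) * fe p x a (k-1) := by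
  induction p generalizing k with
  | zero =>
    rcases lt_trichotomy k 0 with h | rfl | h
    · rw [fe_neg _ _ _ h, fe_neg _ _ _ h, fe_neg _ _ _ (by omega : k - 1 < 0)]
      ring
    · rw [show (0:ℤ) = ((0:ℕ):ℤ) from rfl, fe_natCast, fe_natCast, feN_zero, feN_zero,
        fe_neg _ _ _ (by norm_num : ((0:ℕ):ℤ) - 1 < 0)]
      ring
    · obtain ⟨m, rfl⟩ : ∃ m : ℕ, k = (m:ℤ) + 1 := ⟨(k-1).toNat, by omega⟩
      have e1 : (m:ℤ) + 1 = ((m+1:ℕ):ℤ) := by push_cast; ring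
      rw [e1, fe_natCast, fe_natCast, feN_zero_fun, feN_zero_fun]
      rcases Nat.eq_zero_or_pos m with rfl | hm
      · have e2 : ((0+1:ℕ):ℤ) - 1 = ((0:ℕ):ℤ) := by norm_num
        rw [e2, fe_natCast, feN_zero]
        norm_num
      · obtain ⟨m', rfl⟩ := Nat.exists_eq_succ_of_ne_zero (Nat.pos_iff_ne_zero.1 hm)
        have e2 : ((m'+1+1:ℕ):ℤ) - 1 = ((m'+1:ℕ):ℤ) := by push_cast; ring
        rw [e2, fe_natCast, feN_zero_fun]
        ring
  | succ p ih =>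
    rw [fe_succ, fe_succ (a := a), fe_succ (a := a) (k := k - 1), ih, ih]
    simp only [shiftSeq]
    push_cast
    ring_nf

/-- generalized factorial power `(y|a)^k = (y - a_1)⋯(y - a_k)` -/
def gfp (y : R) (a : ℤ → R) (k : ℕ) : R :=
  ∏ i ∈ Finset.range k, (y - a ((i : ℤ) + 1))

/-- the factorial Schur polynomial `s_λ(x|a)`, defined through the factorial
    Jacobi-Trudi determinant `det( h_{λ_i - i + j}(x | τ^{1-j} a) )_{1≤i,j≤p}` -/
def fschur (p : ℕ) (lam : Fin p → ℕ) (x : Fin p → R) (a : ℤ → R) : R :=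
  Matrix.det (Matrix.of fun i j : Fin p =>
    fh p x (shiftSeq a (-((j : ℕ) : ℤ))) (((lam i : ℕ) : ℤ) - ((i : ℕ) : ℤ) + ((j : ℕ) : ℤ)))

/-- `e_{j+1}(x|τa) = e_{j+1}(x|a) + (a_1 - a_{p-j+1})·e_j(x|a)`. -/
theorem fe_shift_recurrence (p : ℕ) (x : Fin p → R) (a : ℤ → R) (j : ℕ) :
    fe p x (shiftSeq a 1) ((j : ℤ) + 1) =
      fe p x a ((j : ℤ) + 1) + (a 1 - a ((p : ℤ) - (j : ℤ) + 1)) * fe p x a (j : ℤ) := by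
  have h := fe_shift p x a ((j:ℤ) + 1)
  have e1 : (p:ℤ) - ((j:ℤ) + 1) + 2 = (p:ℤ) - (j:ℤ) + 1 := by ring
  have e2 : ((j:ℤ) + 1) - 1 = (j:ℤ) := by ring
  rw [e1, e2] at h
  exact h
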